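/- Let 0 < α < 1. There exist a constant η > 0 and a bounded continuous function f : [0,∞) → [0,∞) such that the function u(t) := ∫_0^t f(z) (t − z)^{α−1} dz satisfies: u(0) = 0, 0 ≤ u(t) ≤ π/sin(πα) for all t ≥ 0, and limsup_{t→∞} u(t) − liminf_{t→∞} u(t) ≥ η; in particular u is bounded but has no limit as t → ∞. -/

import Mathlib

open MeasureTheory Filter

set_option linter.unusedSectionVars false

noncomputable def stmtCseq (α : ℝ) : ℕ → ℝ
  | 0 => 2 + 2 ^ (1/α)
  | n+1 => 2 * stmtCseq α n + max 1 ((32 * α * stmtCseq α n) ^ (1/(1-α)))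

noncomputable def stmtU (α : ℝ) : Set ℝ := ⋃ n, Set.Ioo (stmtCseq α n) (2 * stmtCseq α n)

noncomputable def stmtG (α : ℝ) (z : ℝ) : ℝ := min 1 (Metric.infDist z (stmtU α)ᶜ)

noncomputable def stmtTheta (α : ℝ) : ℝ := α * (1-α) * Real.pi / Real.sin (Real.pi * α)

noncomputable def stmtF (α : ℝ) (z : ℝ) : ℝ := stmtTheta α * (max z 1) ^ (-α) * stmtG α z

section
variable {α : ℝ} (hα0 : 0 < α) (hα1 : α < 1)

include hα0 hα1 in
lemma sin_pos : 0 < Real.sin (Real.pi * α) :=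
  Real.sin_pos_of_pos_of_lt_pi (by positivity) (by nlinarith [Real.pi_pos])

include hα0 hα1 in
lemma theta_pos : 0 < stmtTheta α := by
  have hs := sin_pos hα0 hα1
  have hp := Real.pi_pos
  have hnum : 0 < α * (1-α) * Real.pi := mul_pos (mul_pos hα0 (by linarith)) hp
  exact div_pos hnum hs

lemma cseq_ge (n : ℕ) : 2 + 2 ^ (1/α) ≤ stmtCseq α n := by
  induction n with
  | zero => simp [stmtCseq]
  | succ n ih =>
    have h2 : (0:ℝ) < 2 ^ (1/α) := by positivity
    show 2 + 2 ^ (1/α) ≤ 2 * stmtCseq α n + max 1 ((32 * α * stmtCseq α n) ^ (1/(1-α)))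
    have := le_max_left (1:ℝ) ((32 * α * stmtCseq α n) ^ (1/(1-α)))
    nlinarith

lemma cseq_two (n : ℕ) : (2:ℝ) ≤ stmtCseq α n := by
  have := cseq_ge (α := α) n
  have h2 : (0:ℝ) < 2 ^ (1/α) := by positivity
  linarith

lemma cseq_succ_ge (n : ℕ) : stmtCseq α n + 1 ≤ stmtCseq α (n+1) := by
  have := cseq_two (α := α) n
  have := le_max_left (1:ℝ) ((32 * α * stmtCseq α n) ^ (1/(1-α)))
  show _ ≤ 2 * stmtCseq α n + max 1 ((32 * α * stmtCseq α n) ^ (1/(1-α)))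
  nlinarith

lemma cseq_mono : Monotone (stmtCseq α) :=
  monotone_nat_of_le_succ fun n => by have := cseq_succ_ge (α := α) n; linarith

lemma cseq_ge_n (n : ℕ) : (n:ℝ) ≤ stmtCseq α n := by
  induction n with
  | zero => simpa using (by linarith [cseq_two (α := α) 0] : (0:ℝ) ≤ stmtCseq α 0)
  | succ n ih =>
    have := cseq_succ_ge (α := α) n
    push_cast; linarith

lemma g_nonneg (z : ℝ) : 0 ≤ stmtG α z := le_min zero_le_one Metric.infDist_nonneg

lemma g_le_one (z : ℝ) : stmtG α z ≤ 1 := min_le_left _ _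

lemma g_continuous : Continuous (stmtG α) :=
  continuous_const.min (Metric.continuous_infDist_pt _)

lemma f_continuous : Continuous (stmtF α) := by
  apply Continuous.mul _ g_continuous
  exact continuous_const.mul ((continuous_id.max continuous_const).rpow_const
    (fun x => Or.inl (by positivity)))

include hα0 hα1 in
lemma f_nonneg (z : ℝ) : 0 ≤ stmtF α z := by
  have h1 := theta_pos hα0 hα1
  have h2 : (0:ℝ) < (max z 1) ^ (-α) := Real.rpow_pos_of_pos (by positivity) _
  have := g_nonneg (α := α) z
  unfold stmtF; positivity

include hα0 hα1 in
lemma f_le_theta (z : ℝ) : stmtF α z ≤ stmtTheta α := by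
  have h1 := theta_pos hα0 hα1
  have h2 : (max z 1) ^ (-α) ≤ 1 :=
    Real.rpow_le_one_of_one_le_of_nonpos (le_max_right _ _) (by linarith)
  have h2' : (0:ℝ) ≤ (max z 1) ^ (-α) := Real.rpow_nonneg (by positivity) _
  have hθx : stmtTheta α * (max z 1) ^ (-α) ≤ stmtTheta α * 1 :=
    mul_le_mul_of_nonneg_left h2 h1.le
  calc stmtTheta α * (max z 1) ^ (-α) * stmtG α z
      ≤ (stmtTheta α * 1) * 1 :=
        mul_le_mul hθx (g_le_one z) (g_nonneg z) (by nlinarith)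
    _ = stmtTheta α := by ring

lemma zero_notin_U : (0:ℝ) ∉ stmtU α := by
  simp only [stmtU, Set.mem_iUnion, Set.mem_Ioo, not_exists]
  intro n ⟨h1, h2⟩
  have := cseq_two (α := α) n; linarith

lemma f_eq_zero_of_notin {z : ℝ} (hz : z ∉ stmtU α) : stmtF α z = 0 := by
  have : stmtG α z = 0 := by
    simp [stmtG, Metric.infDist_zero_of_mem (Set.mem_compl hz)]
  simp [stmtF, this]

include hα0 hα1 in
lemma f_le_rpow {z : ℝ} (hz : 0 ≤ z) : stmtF α z ≤ stmtTheta α * z ^ (-α) := by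
  rcases eq_or_lt_of_le hz with h | h
  · rw [f_eq_zero_of_notin (by rw [← h]; exact zero_notin_U), ← h,
      Real.zero_rpow (by linarith : -α ≠ 0), mul_zero]
  · have h1 := theta_pos hα0 hα1
    have h2 : (max z 1) ^ (-α) ≤ z ^ (-α) :=
      Real.rpow_le_rpow_of_nonpos h (le_max_left _ _) (by linarith)
    have h2' : (0:ℝ) ≤ (max z 1) ^ (-α) := Real.rpow_nonneg (by positivity) _
    have := g_le_one (α := α) z
    have := g_nonneg (α := α) z
    have hz' : (0:ℝ) ≤ z ^ (-α) := Real.rpow_nonneg h.le _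
    calc stmtTheta α * (max z 1) ^ (-α) * stmtG α z
        ≤ (stmtTheta α * z ^ (-α)) * 1 :=
          mul_le_mul (mul_le_mul_of_nonneg_left h2 h1.le) (g_le_one z) (g_nonneg z)
            (by nlinarith)
      _ = stmtTheta α * z ^ (-α) := by ring

omit hα0 hα1 in
lemma g_eq_one {n : ℕ} {z : ℝ} (hz : z ∈ Set.Icc (stmtCseq α n + 1) (2 * stmtCseq α n - 1)) :
    stmtG α z = 1 := by
  have hne : ((stmtU α)ᶜ).Nonempty := ⟨0, zero_notin_U⟩
  have h1 : (1:ℝ) ≤ Metric.infDist z (stmtU α)ᶜ := by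
    by_contra hlt
    push_neg at hlt
    obtain ⟨y, hy, hd⟩ := (Metric.infDist_lt_iff hne).1 hlt
    apply hy
    rw [Real.dist_eq, abs_lt] at hd
    exact Set.mem_iUnion.2 ⟨n, by constructor <;> [linarith [hz.1]; linarith [hz.2]]⟩
  simp [stmtG, h1]


omit hα1 in
include hα0 in
lemma ker_integrable' (T a b : ℝ) :
    IntervalIntegrable (fun z => (T - z) ^ (α - 1)) volume a b := by
  have h := (intervalIntegral.intervalIntegrable_rpow' (a := T - a) (b := T - b)
    (r := α - 1) (by linarith)).comp_sub_left T
  simpa using h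

omit hα1 in
include hα0 in
lemma ker_integral {T a b : ℝ} : (∫ z in a..b, (T - z) ^ (α - 1))
    = ((T - a) ^ α - (T - b) ^ α) / α := by
  rw [intervalIntegral.integral_comp_sub_left (fun x => x ^ (α - 1)) T,
    integral_rpow (Or.inl (by linarith))]
  norm_num

omit hα1 in
include hα0 in
lemma ker_nonneg {T z : ℝ} (h : z ≤ T) : 0 ≤ (T - z) ^ (α - 1) :=
  Real.rpow_nonneg (by linarith) _

include hα0 hα1 in
lemma intg (a b t : ℝ) :
    IntervalIntegrable (fun z => stmtF α z * (t - z) ^ (α - 1)) volume a b :=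
  (ker_integrable' hα0 t a b).continuousOn_mul (f_continuous (α := α)).continuousOn

include hα0 hα1 in
lemma u_nonneg {t : ℝ} (ht : 0 ≤ t) :
    0 ≤ ∫ z in (0:ℝ)..t, stmtF α z * (t - z) ^ (α - 1) := by
  apply intervalIntegral.integral_nonneg ht
  intro z hz
  have h3 : 0 ≤ (t - z) ^ (α - 1) := ker_nonneg hα0 hz.2
  have h4 := f_nonneg hα0 hα1 z
  positivity

include hα0 hα1 in
lemma u_le {t : ℝ} (ht : 0 ≤ t) :
    (∫ z in (0:ℝ)..t, stmtF α z * (t - z) ^ (α - 1)) ≤ Real.pi / Real.sin (Real.pi * α) := by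
  have hs := sin_pos hα0 hα1
  have hθ := theta_pos hα0 hα1
  have hπ := Real.pi_pos
  rcases eq_or_lt_of_le ht with rfl | ht
  · rw [intervalIntegral.integral_same]; positivity
  have ht2 : 0 < t/2 := by linarith
  -- piece 1
  have hI1 : (∫ z in (0:ℝ)..(t/2), stmtF α z * (t - z) ^ (α - 1)) ≤ stmtTheta α / (1-α) := by
    have hmono : (∫ z in (0:ℝ)..(t/2), stmtF α z * (t - z) ^ (α - 1))
        ≤ ∫ z in (0:ℝ)..(t/2), stmtTheta α * z ^ (-α) * (t/2) ^ (α - 1) := by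
      apply intervalIntegral.integral_mono_on ht2.le (intg hα0 hα1 _ _ _)
      · exact ((intervalIntegral.intervalIntegrable_rpow' (by linarith)).const_mul
          (stmtTheta α)).mul_const _
      · intro z hz
        have hker : (t - z) ^ (α - 1) ≤ (t/2) ^ (α - 1) :=
          Real.rpow_le_rpow_of_nonpos ht2 (by linarith [hz.2]) (by linarith)
        have hker0 : 0 ≤ (t - z) ^ (α - 1) := ker_nonneg hα0 (by linarith [hz.2])
        have hf := f_le_rpow hα0 hα1 hz.1
        have hf0 := f_nonneg hα0 hα1 z
        have hr0 : (0:ℝ) ≤ stmtTheta α * z ^ (-α) := by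
          have := Real.rpow_nonneg hz.1 (-α); positivity
        exact mul_le_mul hf hker hker0 hr0
    have hval : (∫ z in (0:ℝ)..(t/2), stmtTheta α * z ^ (-α) * (t/2) ^ (α - 1))
        = stmtTheta α / (1-α) := by
      rw [intervalIntegral.integral_mul_const, intervalIntegral.integral_const_mul,
        integral_rpow (Or.inl (by linarith))]
      rw [Real.zero_rpow (by linarith : -α + 1 ≠ 0)]
      have h1 : (t/2) ^ (-α + 1) * (t/2) ^ (α - 1) = 1 := by
        rw [← Real.rpow_add ht2]; norm_num
      have h2 : stmtTheta α * (((t/2) ^ (-α + 1) - 0)/(-α+1)) * (t/2) ^ (α - 1)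
          = stmtTheta α * ((t/2) ^ (-α + 1) * (t/2) ^ (α - 1)) / (-α+1) := by ring
      rw [h2, h1, mul_one]
      have h3 : -α + 1 = 1 - α := by ring
      rw [h3]
    linarith
  -- piece 2
  have hI2 : (∫ z in (t/2)..t, stmtF α z * (t - z) ^ (α - 1)) ≤ stmtTheta α / α := by
    set m := max (t/2) 1 with hm
    have hm0 : (0:ℝ) < m := lt_of_lt_of_le one_pos (le_max_right _ _)
    have hmono : (∫ z in (t/2)..t, stmtF α z * (t - z) ^ (α - 1))
        ≤ ∫ z in (t/2)..t, stmtTheta α * m ^ (-α) * (t - z) ^ (α - 1) := by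
      apply intervalIntegral.integral_mono_on (by linarith) (intg hα0 hα1 _ _ _)
        ((ker_integrable' hα0 t _ _).const_mul _)
      intro z hz
      have hker0 : 0 ≤ (t - z) ^ (α - 1) := ker_nonneg hα0 hz.2
      have hfle : stmtF α z ≤ stmtTheta α * m ^ (-α) := by
        have h2 : (max z 1) ^ (-α) ≤ m ^ (-α) :=
          Real.rpow_le_rpow_of_nonpos hm0 (max_le_max hz.1 le_rfl) (by linarith)
        have h2' : (0:ℝ) ≤ (max z 1) ^ (-α) := Real.rpow_nonneg (by positivity) _
        calc stmtF α z ≤ stmtTheta α * (max z 1) ^ (-α) * 1 :=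
              mul_le_mul_of_nonneg_left (g_le_one z) (by positivity)
          _ = stmtTheta α * (max z 1) ^ (-α) := mul_one _
          _ ≤ stmtTheta α * m ^ (-α) := mul_le_mul_of_nonneg_left h2 hθ.le
      exact mul_le_mul_of_nonneg_right hfle hker0
    have hval : (∫ z in (t/2)..t, stmtTheta α * m ^ (-α) * (t - z) ^ (α - 1))
        = stmtTheta α * m ^ (-α) * (t/2) ^ α / α := by
      rw [intervalIntegral.integral_const_mul, ker_integral hα0]
      rw [sub_self, Real.zero_rpow hα0.ne']
      ring_nf
    have hch := hmono.trans_eq hval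
    rcases le_or_gt 2 t with h2t | h2t
    · have hmeq : m = t/2 := max_eq_left (by linarith)
      have h1 : (t/2) ^ (-α) * (t/2) ^ α = 1 := by
        rw [← Real.rpow_add ht2]; norm_num
      calc (∫ z in (t/2)..t, stmtF α z * (t - z) ^ (α - 1))
          ≤ stmtTheta α * m ^ (-α) * (t/2) ^ α / α := hch
        _ = stmtTheta α * ((t/2) ^ (-α) * (t/2) ^ α) / α := by rw [hmeq]; ring
        _ = stmtTheta α / α := by rw [h1, mul_one]
    · have hmeq : m = 1 := max_eq_right (by linarith)
      have h1 : (t/2) ^ α ≤ 1 := Real.rpow_le_one ht2.le (by linarith) hα0.le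
      have h1' : (0:ℝ) ≤ (t/2) ^ α := Real.rpow_nonneg ht2.le _
      calc (∫ z in (t/2)..t, stmtF α z * (t - z) ^ (α - 1))
          ≤ stmtTheta α * m ^ (-α) * (t/2) ^ α / α := hch
        _ = stmtTheta α * (t/2) ^ α / α := by rw [hmeq, Real.one_rpow, mul_one]
        _ ≤ stmtTheta α / α := by gcongr; nlinarith
  have hsplit := intervalIntegral.integral_add_adjacent_intervals
    (intg hα0 hα1 0 (t/2) t) (intg hα0 hα1 (t/2) t t)
  have hsum : stmtTheta α/(1-α) + stmtTheta α/α = Real.pi / Real.sin (Real.pi * α) := by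
    have h1α : (1-α) ≠ 0 := by linarith
    have hsne : Real.sin (Real.pi * α) ≠ 0 := hs.ne'
    unfold stmtTheta
    field_simp
    ring
  linarith [hsplit.symm.le.trans (by linarith : (∫ z in (0:ℝ)..(t/2), stmtF α z * (t - z) ^ (α - 1)) + (∫ z in (t/2)..t, stmtF α z * (t - z) ^ (α - 1)) ≤ stmtTheta α/(1-α) + stmtTheta α/α)]
include hα0 hα1 in
lemma u_lower (n : ℕ) :
    stmtTheta α / (8*α) ≤ ∫ z in (0:ℝ)..(2 * stmtCseq α n),
      stmtF α z * (2 * stmtCseq α n - z) ^ (α - 1) := by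
  have hθ := theta_pos hα0 hα1
  set c := stmtCseq α n with hc
  have hc2 : (2:ℝ) ≤ c := cseq_two n
  have hcge : 2 + 2 ^ (1/α) ≤ c := cseq_ge n
  have h2pos : (0:ℝ) < 2 ^ (1/α) := by positivity
  set T := 2 * c with hT
  -- middle integral lower bound
  have hmid : stmtTheta α * (2*c) ^ (-α) * ((c-1) ^ α - 1) / α
      ≤ ∫ z in (c+1)..(2*c-1), stmtF α z * (T - z) ^ (α - 1) := by
    have hmono : (∫ z in (c+1)..(2*c-1), stmtTheta α * (2*c) ^ (-α) * (T - z) ^ (α - 1))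
        ≤ ∫ z in (c+1)..(2*c-1), stmtF α z * (T - z) ^ (α - 1) := by
      apply intervalIntegral.integral_mono_on (by linarith)
        (((ker_integrable' hα0 T _ _)).const_mul _) (intg hα0 hα1 _ _ _)
      intro z hz
      have hz1 : c + 1 ≤ z := hz.1
      have hz2 : z ≤ 2*c - 1 := hz.2
      have hker0 : 0 ≤ (T - z) ^ (α - 1) := ker_nonneg hα0 (by simp only [hT]; linarith)
      have hg1 : stmtG α z = 1 := g_eq_one ⟨by linarith, by linarith⟩
      have hmax : max z 1 = z := max_eq_left (by linarith)
      have hrle : (2*c) ^ (-α) ≤ z ^ (-α) :=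
        Real.rpow_le_rpow_of_nonpos (by linarith) (by linarith) (by linarith)
      have : stmtTheta α * (2*c) ^ (-α) ≤ stmtF α z := by
        unfold stmtF
        rw [hg1, hmax, mul_one]
        exact mul_le_mul_of_nonneg_left hrle hθ.le
      exact mul_le_mul_of_nonneg_right this hker0
    have hval : (∫ z in (c+1)..(2*c-1), stmtTheta α * (2*c) ^ (-α) * (T - z) ^ (α - 1))
        = stmtTheta α * (2*c) ^ (-α) * ((c-1) ^ α - 1) / α := by
      rw [intervalIntegral.integral_const_mul, ker_integral hα0]
      have e1 : T - (c+1) = c - 1 := by rw [hT]; ring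
      have e2 : T - (2*c-1) = 1 := by rw [hT]; ring
      rw [e1, e2, Real.one_rpow]
      ring
    linarith [hval ▸ hmono]
  -- nonnegativity of side pieces
  have hside1 : 0 ≤ ∫ z in (0:ℝ)..(c+1), stmtF α z * (T - z) ^ (α - 1) := by
    apply intervalIntegral.integral_nonneg (by linarith)
    intro z hz
    exact mul_nonneg (f_nonneg hα0 hα1 z) (ker_nonneg hα0 (by simp only [hT]; linarith [hz.2]))
  have hside2 : 0 ≤ ∫ z in (2*c-1)..T, stmtF α z * (T - z) ^ (α - 1) := by
    apply intervalIntegral.integral_nonneg (by simp only [hT]; linarith)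
    intro z hz
    exact mul_nonneg (f_nonneg hα0 hα1 z) (ker_nonneg hα0 hz.2)
  have hsplit1 := intervalIntegral.integral_add_adjacent_intervals
    (intg hα0 hα1 0 (c+1) T) (intg hα0 hα1 (c+1) (2*c-1) T)
  have hsplit2 := intervalIntegral.integral_add_adjacent_intervals
    ((intg hα0 hα1 0 (c+1) T).trans (intg hα0 hα1 (c+1) (2*c-1) T)) (intg hα0 hα1 (2*c-1) T T)
  -- numeric chain
  have hnum : stmtTheta α / (8*α) ≤ stmtTheta α * (2*c) ^ (-α) * ((c-1) ^ α - 1) / α := by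
    have hA : (2:ℝ) ≤ (c-1) ^ α := by
      have h1 : ((2:ℝ) ^ (1/α)) ^ α ≤ (c-1) ^ α :=
        Real.rpow_le_rpow (by positivity) (by linarith) hα0.le
      rwa [← Real.rpow_mul (by norm_num : (0:ℝ) ≤ 2), one_div,
        inv_mul_cancel₀ hα0.ne', Real.rpow_one] at h1
    have hB : (c/2) ^ α ≤ (c-1) ^ α :=
      Real.rpow_le_rpow (by linarith) (by linarith) hα0.le
    have hC : (2*c) ^ (-α) * (c/2) ^ α = (4:ℝ) ^ (-α) := by
      have h2 : (c/2:ℝ) ^ α * (4:ℝ) ^ α = (2*c) ^ α := by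
        rw [← Real.mul_rpow (by linarith) (by norm_num)]
        ring_nf
      have p1 : (0:ℝ) < (2*c) ^ α := Real.rpow_pos_of_pos (by linarith) _
      have p2 : (0:ℝ) < (4:ℝ) ^ α := Real.rpow_pos_of_pos (by norm_num) _
      rw [Real.rpow_neg (by linarith), Real.rpow_neg (by norm_num)]
      field_simp
      linarith [h2]
    have hD : (1/4:ℝ) ≤ (4:ℝ) ^ (-α) := by
      have h := Real.rpow_le_rpow_of_exponent_le (by norm_num : (1:ℝ) ≤ 4)
        (by linarith : -(1:ℝ) ≤ -α)
      rwa [Real.rpow_neg_one, (by norm_num : ((4:ℝ))⁻¹ = 1/4)] at h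
    have hpos2c : (0:ℝ) < (2*c) ^ (-α) := Real.rpow_pos_of_pos (by linarith) _
    have hE : (1/8:ℝ) ≤ (2*c) ^ (-α) * ((c-1) ^ α - 1) := by
      calc (1/8:ℝ) = (1/4)/2 := by norm_num
        _ ≤ (4:ℝ) ^ (-α)/2 := by linarith
        _ = (2*c) ^ (-α) * (c/2) ^ α / 2 := by rw [hC]
        _ ≤ (2*c) ^ (-α) * ((c-1) ^ α - 1) := by nlinarith
    calc stmtTheta α / (8*α) = stmtTheta α * (1/8) / α := by ring
      _ ≤ stmtTheta α * ((2*c) ^ (-α) * ((c-1) ^ α - 1)) / α := by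
          gcongr
      _ = stmtTheta α * (2*c) ^ (-α) * ((c-1) ^ α - 1) / α := by ring
  linarith [hsplit1, hsplit2]
omit hα0 hα1 in
lemma notin_U {n : ℕ} {z : ℝ} (h1 : 2 * stmtCseq α n ≤ z) (h2 : z ≤ stmtCseq α (n+1)) :
    z ∉ stmtU α := by
  intro hz
  obtain ⟨k, hk1, hk2⟩ := Set.mem_iUnion.1 hz
  rcases le_or_gt k n with h | h
  · have : stmtCseq α k ≤ stmtCseq α n := cseq_mono h
    have h0 : (0:ℝ) ≤ stmtCseq α k := by linarith [cseq_two (α := α) k]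
    linarith
  · have : stmtCseq α (n+1) ≤ stmtCseq α k := cseq_mono h
    linarith

include hα0 hα1 in
lemma u_upper_small (n : ℕ) :
    (∫ z in (0:ℝ)..(stmtCseq α (n+1)), stmtF α z * (stmtCseq α (n+1) - z) ^ (α - 1))
      ≤ stmtTheta α / (16*α) := by
  have hθ := theta_pos hα0 hα1
  set c := stmtCseq α n with hc
  have hc2 : (2:ℝ) ≤ c := cseq_two n
  set D := max 1 ((32 * α * c) ^ (1/(1-α))) with hD
  have hT : stmtCseq α (n+1) = 2 * c + D := rfl
  have hD1 : (1:ℝ) ≤ D := le_max_left _ _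
  set T := stmtCseq α (n+1) with hTn
  -- second piece is zero
  have hzero : (∫ z in (2*c)..T, stmtF α z * (T - z) ^ (α - 1)) = 0 := by
    rw [intervalIntegral.integral_congr (g := fun _ => (0:ℝ)), intervalIntegral.integral_zero]
    intro z hz
    rw [Set.uIcc_of_le (by rw [hT]; linarith)] at hz
    have := notin_U (α := α) (n := n) hz.1 hz.2
    simp [f_eq_zero_of_notin this]
  -- first piece bound
  have hfirst : (∫ z in (0:ℝ)..(2*c), stmtF α z * (T - z) ^ (α - 1))
      ≤ stmtTheta α * D ^ (α-1) * (2*c) := by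
    have hmono : (∫ z in (0:ℝ)..(2*c), stmtF α z * (T - z) ^ (α - 1))
        ≤ ∫ z in (0:ℝ)..(2*c), stmtTheta α * D ^ (α-1) := by
      apply intervalIntegral.integral_mono_on (by linarith) (intg hα0 hα1 _ _ _)
        intervalIntegrable_const
      intro z hz
      have hker0 : 0 ≤ (T - z) ^ (α - 1) := ker_nonneg hα0 (by rw [hT]; linarith [hz.2])
      have hkerle : (T - z) ^ (α - 1) ≤ D ^ (α - 1) :=
        Real.rpow_le_rpow_of_nonpos (by linarith) (by rw [hT]; linarith [hz.2]) (by linarith)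
      exact mul_le_mul (f_le_theta hα0 hα1 z) hkerle hker0 hθ.le
    rw [intervalIntegral.integral_const, smul_eq_mul, sub_zero] at hmono
    linarith [hmono]
  have hsplit := intervalIntegral.integral_add_adjacent_intervals
    (intg hα0 hα1 0 (2*c) T) (intg hα0 hα1 (2*c) T T)
  -- numeric bound
  have hnum : stmtTheta α * D ^ (α-1) * (2*c) ≤ stmtTheta α / (16*α) := by
    have h32 : (0:ℝ) < 32 * α * c := by positivity
    have hX : (0:ℝ) < (32 * α * c) ^ (1/(1-α)) := Real.rpow_pos_of_pos h32 _
    have hXD : (32 * α * c) ^ (1/(1-α)) ≤ D := le_max_right _ _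
    have h1 : D ^ (α-1) ≤ ((32 * α * c) ^ (1/(1-α))) ^ (α-1) :=
      Real.rpow_le_rpow_of_nonpos hX hXD (by linarith)
    have h1α : (1-α) ≠ 0 := by linarith
    have h2 : ((32 * α * c) ^ (1/(1-α))) ^ (α-1) = (32 * α * c)⁻¹ := by
      rw [← Real.rpow_mul h32.le]
      have he : (1/(1-α)) * (α-1) = -1 := by field_simp; ring
      rw [he, Real.rpow_neg_one]
    have h3 : stmtTheta α * (32*α*c)⁻¹ * (2*c) = stmtTheta α/(16*α) := by
      field_simp
      ring
    calc stmtTheta α * D ^ (α-1) * (2*c) ≤ stmtTheta α * (32*α*c)⁻¹ * (2*c) := by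
          have := h1.trans_eq h2
          gcongr
      _ = stmtTheta α / (16*α) := h3
  calc (∫ z in (0:ℝ)..T, stmtF α z * (T - z) ^ (α - 1))
      = (∫ z in (0:ℝ)..(2*c), stmtF α z * (T - z) ^ (α - 1))
        + ∫ z in (2*c)..T, stmtF α z * (T - z) ^ (α - 1) := hsplit.symm
    _ ≤ stmtTheta α * D ^ (α-1) * (2*c) + 0 := by linarith
    _ ≤ stmtTheta α / (16*α) := by linarith
include hα0 hα1 in
lemma freq_lower : ∃ᶠ t in atTop, stmtTheta α / (8*α)
    ≤ ∫ z in (0:ℝ)..t, stmtF α z * (t - z) ^ (α - 1) := by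
  have htend : Tendsto (fun n : ℕ => 2 * stmtCseq α n) atTop atTop := by
    apply tendsto_atTop_mono (fun n => ?_) tendsto_natCast_atTop_atTop
    have h1 := cseq_ge_n (α := α) n
    have h2 := cseq_two (α := α) n
    linarith
  exact htend.frequently (Frequently.of_forall (fun n => u_lower hα0 hα1 n))

include hα0 hα1 in
lemma freq_upper : ∃ᶠ t in atTop, (∫ z in (0:ℝ)..t, stmtF α z * (t - z) ^ (α - 1))
    ≤ stmtTheta α / (16*α) := by
  have htend : Tendsto (fun n : ℕ => stmtCseq α (n+1)) atTop atTop := by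
    apply tendsto_atTop_mono (fun n => ?_) tendsto_natCast_atTop_atTop
    have h1 := cseq_ge_n (α := α) (n+1)
    push_cast at h1
    linarith
  exact htend.frequently (Frequently.of_forall (fun n => u_upper_small hα0 hα1 n))

end


/-- For `0 < α < 1` there exist `η > 0` and a bounded continuous nonnegative
function `f` on `[0,∞)` whose fractional integral `u t = ∫_0^t f z (t-z)^(α-1) dz`
satisfies `u 0 = 0`, `0 ≤ u t ≤ π / sin (π α)` for all `t ≥ 0`, and
`limsup u - liminf u ≥ η` at infinity; in particular `u` is bounded but has no limit. -/
theorem stmt_1 (α : ℝ) (hα0 : 0 < α) (hα1 : α < 1) :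
    ∃ (η : ℝ) (f : ℝ → ℝ), 0 < η ∧
      (∃ M : ℝ, ∀ t, 0 ≤ t → |f t| ≤ M) ∧
      ContinuousOn f (Set.Ici 0) ∧
      (∀ t, 0 ≤ t → 0 ≤ f t) ∧
      (∫ z in (0:ℝ)..(0:ℝ), f z * ((0:ℝ) - z) ^ (α - 1)) = 0 ∧
      (∀ t, 0 ≤ t →
        0 ≤ (∫ z in (0:ℝ)..t, f z * (t - z) ^ (α - 1)) ∧
        (∫ z in (0:ℝ)..t, f z * (t - z) ^ (α - 1)) ≤ Real.pi / Real.sin (Real.pi * α)) ∧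
      η ≤ limsup (fun t => ∫ z in (0:ℝ)..t, f z * (t - z) ^ (α - 1)) atTop
            - liminf (fun t => ∫ z in (0:ℝ)..t, f z * (t - z) ^ (α - 1)) atTop := by
  have hθ := theta_pos hα0 hα1
  refine ⟨stmtTheta α / (16*α), stmtF α, by positivity, ⟨stmtTheta α, fun t _ => ?_⟩,
    (f_continuous (α := α)).continuousOn, fun t _ => f_nonneg hα0 hα1 t,
    intervalIntegral.integral_same, fun t ht => ⟨u_nonneg hα0 hα1 ht, u_le hα0 hα1 ht⟩, ?_⟩
  · exact abs_le.2 ⟨by linarith [f_nonneg hα0 hα1 t], f_le_theta hα0 hα1 t⟩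
  · have hbddabove : IsBoundedUnder (· ≤ ·) atTop
        (fun t => ∫ z in (0:ℝ)..t, stmtF α z * (t - z) ^ (α - 1)) := by
      refine ⟨Real.pi / Real.sin (Real.pi * α), eventually_map.2 ?_⟩
      filter_upwards [eventually_ge_atTop (0:ℝ)] with t ht using u_le hα0 hα1 ht
    have hbddbelow : IsBoundedUnder (· ≥ ·) atTop
        (fun t => ∫ z in (0:ℝ)..t, stmtF α z * (t - z) ^ (α - 1)) := by
      refine ⟨0, eventually_map.2 ?_⟩
      filter_upwards [eventually_ge_atTop (0:ℝ)] with t ht using u_nonneg hα0 hα1 ht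
    have h1 := le_limsup_of_frequently_le (freq_lower hα0 hα1) hbddabove
    have h2 := liminf_le_of_frequently_le (freq_upper hα0 hα1) hbddbelow
    have h3 : stmtTheta α / (8*α) = 2 * (stmtTheta α / (16*α)) := by ring
    linarith
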